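/- Let m ≥ 3, let r > 2 be real, and place m candidates in ℝ^{m−1} by y_i = e_i (the i-th standard basis vector) for 1 ≤ i ≤ m−1 and y_m = (r, r, …, r). Let 1 ≤ w < m−1 and let f be an anonymous strategy-proof randomized w-winner scv mechanism for these candidates and n voters. Then for every subset L of {1, …, m} of size w and any two action profiles a and a' in which every candidate in L receives the same number of votes under a as under a', the probability that L is elected is the same: p_L(a) = p_L(a'). In other words, the probability of a committee being elected depends only on the vote counts of its w members. -/

import Mathlib

open Finset

/-- Cost of a point `z` when the pair of candidates `(y k, y l)` is elected:
the distance to the closer of the two winners. -/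
noncomputable def pairCost {α : Type*} [PseudoMetricSpace α] {m : ℕ}
    (y : Fin m → α) (k l : Fin m) (z : α) : ℝ :=
  min (dist z (y k)) (dist z (y l))

/-- Social cost of the pair `(y k, y l)` on the location profile `x`. -/
noncomputable def socialCost {α : Type*} [PseudoMetricSpace α] {m n : ℕ}
    (y : Fin m → α) (k l : Fin m) (x : Fin n → α) : ℝ :=
  ∑ i, pairCost y k l (x i)

/-- Optimal social cost over all pairs of distinct candidates. -/
noncomputable def OPT {α : Type*} [PseudoMetricSpace α] {m n : ℕ}
    (y : Fin m → α) (x : Fin n → α) : ℝ :=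
  sInf {c : ℝ | ∃ k l : Fin m, k ≠ l ∧ c = socialCost y k l x}

/-- A location profile `x` is consistent with an action profile `a` if every
voter votes for (one of) her nearest candidate(s). -/
def Consistent {α : Type*} [PseudoMetricSpace α] {m n : ℕ}
    (y : Fin m → α) (a : Fin n → Fin m) (x : Fin n → α) : Prop :=
  ∀ (i : Fin n) (k : Fin m), dist (x i) (y (a i)) ≤ dist (x i) (y k)

/-- Number of votes received by candidate `k` under action profile `a`. -/
def votes {m n : ℕ} (a : Fin n → Fin m) (k : Fin m) : ℕ :=
  (univ.filter fun i => a i = k).card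

/-- The candidate configuration of Instance 3 of the paper: in `ℝ^(m-1)`,
candidate `i` (for `i < m - 1`) sits at the `i`-th standard basis vector, and the
last candidate sits at `(r, r, ..., r)`. -/
noncomputable def multiCand (m : ℕ) (r : ℝ) : Fin m → EuclideanSpace ℝ (Fin (m - 1)) :=
  fun k =>
    if h : (k : ℕ) < m - 1 then EuclideanSpace.single (⟨(k : ℕ), h⟩ : Fin (m - 1)) (1 : ℝ)
    else (WithLp.equiv 2 (Fin (m - 1) → ℝ)).symm (fun _ => r)

/-- Cost of the point `z` under an elected committee `L`:
the distance to the nearest elected candidate. -/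
noncomputable def commCost {α : Type*} [PseudoMetricSpace α] {m : ℕ}
    (y : Fin m → α) (L : Finset (Fin m)) (z : α) : ℝ :=
  if h : L.Nonempty then L.inf' h (fun k => dist z (y k)) else 0

/-- `f` is a randomized `w`-winner mechanism: on every action profile it gives
a probability distribution over committees (subsets of candidates) of size `w`. -/
def IsCommMech {m n : ℕ} (w : ℕ) (f : (Fin n → Fin m) → Finset (Fin m) → ℝ) : Prop :=
  ∀ a : Fin n → Fin m, (∀ L, 0 ≤ f a L) ∧ (∀ L, L.card ≠ w → f a L = 0) ∧
    ∑ L ∈ univ.filter (fun L : Finset (Fin m) => L.card = w), f a L = 1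

/-- Expected cost of the point `z` under the committee lottery `f a`. -/
noncomputable def expCommCost {α : Type*} [PseudoMetricSpace α] {m n : ℕ}
    (y : Fin m → α) (w : ℕ) (f : (Fin n → Fin m) → Finset (Fin m) → ℝ)
    (a : Fin n → Fin m) (z : α) : ℝ :=
  ∑ L ∈ univ.filter (fun L : Finset (Fin m) => L.card = w), f a L * commCost y L z

/-- Strategy-proofness of a randomized `w`-winner mechanism. -/
def CommSP {α : Type*} [PseudoMetricSpace α] {m n : ℕ}
    (y : Fin m → α) (w : ℕ) (f : (Fin n → Fin m) → Finset (Fin m) → ℝ) : Prop :=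
  ∀ (i : Fin n) (xi : α) (a : Fin n → Fin m) (astar ai' : Fin m),
    (∀ k, dist xi (y astar) ≤ dist xi (y k)) →
    expCommCost y w f (Function.update a i astar) xi ≤
      expCommCost y w f (Function.update a i ai') xi

section Aux
variable {m : ℕ}

noncomputable def pt (m : ℕ) (V : Finset (Fin m)) (T : ℝ) : EuclideanSpace ℝ (Fin (m-1)) :=
  (WithLp.equiv 2 (Fin (m-1) → ℝ)).symm fun t => if Fin.castLE (Nat.sub_le m 1) t ∈ V then 0 else T

lemma pt_apply (V : Finset (Fin m)) (T : ℝ) (t : Fin (m-1)) :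
    pt m V T t = if Fin.castLE (Nat.sub_le m 1) t ∈ V then 0 else T := rfl

def farc (m : ℕ) (hm : 3 ≤ m) : Fin m := ⟨m - 1, by omega⟩

lemma card_filter_mem (hm : 3 ≤ m) (V : Finset (Fin m)) (hV : farc m hm ∉ V) :
    (univ.filter fun t : Fin (m-1) => Fin.castLE (Nat.sub_le m 1) t ∈ V).card = V.card := by
  apply Finset.card_bij (fun t _ => Fin.castLE (Nat.sub_le m 1) t)
  · intro t ht; exact (mem_filter.mp ht).2
  · intro t1 h1 t2 h2 h; exact Fin.castLE_injective _ h
  · intro k hk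
    have hlt : (k : ℕ) < m - 1 := by
      rcases Nat.lt_or_ge (k : ℕ) (m-1) with h | h
      · exact h
      · exfalso
        have hk2 : (k : ℕ) = m - 1 := by have := k.isLt; omega
        have : k = farc m hm := Fin.ext hk2
        exact hV (this ▸ hk)
    exact ⟨⟨(k : ℕ), hlt⟩, mem_filter.mpr ⟨mem_univ _, by
        rw [show Fin.castLE (Nat.sub_le m 1) ⟨(k:ℕ), hlt⟩ = k from Fin.ext rfl]; exact hk⟩,
      Fin.ext rfl⟩

lemma card_filter_not_mem (hm : 3 ≤ m) (V : Finset (Fin m)) (hV : farc m hm ∉ V) :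
    (univ.filter fun t : Fin (m-1) => ¬ (Fin.castLE (Nat.sub_le m 1) t ∈ V)).card
      = m - 1 - V.card := by
  have h := Finset.card_filter_add_card_filter_not
    (s := (univ : Finset (Fin (m-1)))) (p := fun t => Fin.castLE (Nat.sub_le m 1) t ∈ V)
  rw [card_filter_mem hm V hV, card_univ, Fintype.card_fin] at h
  omega

lemma sum_sq_pt (hm : 3 ≤ m) (V : Finset (Fin m)) (hV : farc m hm ∉ V) (T : ℝ) :
    ∑ t : Fin (m-1), (pt m V T t)^2 = ((m - 1 - V.card : ℕ) : ℝ) * T^2 := by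
  simp only [pt_apply, apply_ite (· ^ 2)]
  rw [Finset.sum_ite, Finset.sum_const, Finset.sum_const, card_filter_not_mem hm V hV]
  simp [nsmul_eq_mul]


lemma dist_pt_mem (hm : 3 ≤ m) (r : ℝ) {V : Finset (Fin m)} (hV : farc m hm ∉ V) (T : ℝ)
    {k : Fin m} (hk : k ∈ V) :
    dist (pt m V T) (multiCand m r k) =
      Real.sqrt (((m - 1 - V.card : ℕ) : ℝ) * T^2 + 1) := by
  have hkfar : k ≠ farc m hm := fun h => hV (h ▸ hk)
  have hklt : (k : ℕ) < m - 1 := by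
    have := k.isLt
    rcases Nat.lt_or_ge (k : ℕ) (m-1) with h | h
    · exact h
    · exact absurd (Fin.ext (by omega : (k:ℕ) = m - 1)) hkfar
  set j : Fin (m-1) := ⟨(k:ℕ), hklt⟩ with hj
  have hcast : Fin.castLE (Nat.sub_le m 1) j = k := Fin.ext rfl
  have hxj : pt m V T j = 0 := by rw [pt_apply, if_pos (hcast ▸ hk)]
  rw [EuclideanSpace.dist_eq, multiCand, dif_pos hklt]
  congr 1
  rw [← Finset.add_sum_erase _ _ (mem_univ j)]
  have h1 : dist (pt m V T j) (EuclideanSpace.single j (1:ℝ) j) ^ 2 = 1 := by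
    rw [hxj, EuclideanSpace.single_apply, if_pos rfl, Real.dist_eq]
    norm_num
  have h2 : ∀ t ∈ univ.erase j,
      dist (pt m V T t) (EuclideanSpace.single j (1:ℝ) t) ^ 2 = (pt m V T t)^2 := by
    intro t ht
    rw [EuclideanSpace.single_apply, if_neg (mem_erase.mp ht).1, Real.dist_eq]
    rw [sub_zero, sq_abs]
  rw [h1, Finset.sum_congr rfl h2, Finset.sum_erase_eq_sub (mem_univ j),
    sum_sq_pt hm V hV, hxj]
  ring

lemma dist_pt_not_mem (hm : 3 ≤ m) (r : ℝ) {V : Finset (Fin m)} (hV : farc m hm ∉ V) (T : ℝ)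
    {k : Fin m} (hk : k ∉ V) (hkfar : k ≠ farc m hm) :
    dist (pt m V T) (multiCand m r k) =
      Real.sqrt (((m - 1 - V.card : ℕ) : ℝ) * T^2 + 1 - 2*T) := by
  have hklt : (k : ℕ) < m - 1 := by
    have := k.isLt
    rcases Nat.lt_or_ge (k : ℕ) (m-1) with h | h
    · exact h
    · exact absurd (Fin.ext (by omega : (k:ℕ) = m - 1)) hkfar
  set j : Fin (m-1) := ⟨(k:ℕ), hklt⟩ with hj
  have hcast : Fin.castLE (Nat.sub_le m 1) j = k := Fin.ext rfl
  have hxj : pt m V T j = T := by rw [pt_apply, if_neg (hcast ▸ hk)]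
  rw [EuclideanSpace.dist_eq, multiCand, dif_pos hklt]
  congr 1
  rw [← Finset.add_sum_erase _ _ (mem_univ j)]
  have h1 : dist (pt m V T j) (EuclideanSpace.single j (1:ℝ) j) ^ 2 = (T-1)^2 := by
    rw [hxj, EuclideanSpace.single_apply, if_pos rfl, Real.dist_eq, sq_abs]
  have h2 : ∀ t ∈ univ.erase j,
      dist (pt m V T t) (EuclideanSpace.single j (1:ℝ) t) ^ 2 = (pt m V T t)^2 := by
    intro t ht
    rw [EuclideanSpace.single_apply, if_neg (mem_erase.mp ht).1, Real.dist_eq]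
    rw [sub_zero, sq_abs]
  rw [h1, Finset.sum_congr rfl h2, Finset.sum_erase_eq_sub (mem_univ j),
    sum_sq_pt hm V hV, hxj]
  ring

lemma dist_pt_far (hm : 3 ≤ m) (r : ℝ) {V : Finset (Fin m)} (hV : farc m hm ∉ V) (T : ℝ) :
    dist (pt m V T) (multiCand m r (farc m hm)) =
      Real.sqrt ((V.card : ℝ) * r^2 + ((m - 1 - V.card : ℕ) : ℝ) * (T - r)^2) := by
  have hfl : ¬ ((farc m hm : ℕ) < m - 1) := by simp [farc]
  rw [EuclideanSpace.dist_eq, multiCand, dif_neg hfl]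
  congr 1
  have h2 : ∀ t ∈ univ, dist (pt m V T t)
      (((WithLp.equiv 2 (Fin (m-1) → ℝ)).symm (fun _ => r)) t) ^ 2
      = if Fin.castLE (Nat.sub_le m 1) t ∈ V then r^2 else (T - r)^2 := by
    intro t _
    change dist (pt m V T t) r ^ 2 = _
    rw [pt_apply, Real.dist_eq]
    split_ifs with h
    · rw [sq_abs]; ring
    · rw [sq_abs]
  rw [Finset.sum_congr rfl h2, Finset.sum_ite, Finset.sum_const, Finset.sum_const,
    card_filter_mem hm V hV, card_filter_not_mem hm V hV]
  simp [nsmul_eq_mul]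


lemma exists_point (hm : 3 ≤ m) {r : ℝ} (hr : 2 < r) (W : Finset (Fin m))
    {k1 k2 : Fin m} (h12 : k1 ≠ k2) (h1 : k1 ∉ W) (h2 : k2 ∉ W) :
    ∃ (x : EuclideanSpace ℝ (Fin (m-1))) (c₁ c₂ : ℝ), c₁ < c₂ ∧
      ∀ k, dist x (multiCand m r k) = if k ∈ W then c₂ else c₁ := by
  set far := farc m hm with hfar
  have hrpos : (0:ℝ) < r := by linarith
  have hB2 : (2:ℝ) ≤ (m:ℝ) - 1 := by
    have : (3:ℝ) ≤ (m:ℝ) := by exact_mod_cast hm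
    linarith
  by_cases hf : far ∈ W
  · -- case A : far ∈ W
    set V := W.erase far with hVdef
    have hVf : far ∉ V := notMem_erase _ _
    have hk1f : k1 ≠ far := fun h => h1 (h ▸ hf)
    have hk2f : k2 ≠ far := fun h => h2 (h ▸ hf)
    have hk1V : k1 ∉ V := fun h => h1 (mem_of_mem_erase h)
    have hk2V : k2 ∉ V := fun h => h2 (mem_of_mem_erase h)
    have hVsub : V ⊆ ((univ.erase far).erase k1).erase k2 := by
      intro k hk
      have hkW := mem_of_mem_erase hk
      refine mem_erase.mpr ⟨fun h => h2 (h ▸ hkW), mem_erase.mpr ⟨fun h => h1 (h ▸ hkW),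
        mem_erase.mpr ⟨(mem_erase.mp hk).1, mem_univ _⟩⟩⟩
    have hVcard : V.card + 3 ≤ m := by
      have h3 := Finset.card_le_card hVsub
      rw [card_erase_of_mem (mem_erase.mpr ⟨h12.symm, mem_erase.mpr ⟨hk2f, mem_univ _⟩⟩),
        card_erase_of_mem (mem_erase.mpr ⟨hk1f, mem_univ _⟩),
        card_erase_of_mem (mem_univ _), card_univ, Fintype.card_fin] at h3
      omega
    have hvle : V.card ≤ m - 1 := by omega
    set v : ℝ := (V.card : ℝ) with hv
    set c0 : ℝ := ((m - 1 - V.card : ℕ) : ℝ) with hc0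
    have hvS : v + c0 = (m:ℝ) - 1 := by
      rw [hv, hc0]
      have : ((m - 1 - V.card : ℕ) : ℝ) = ((m-1:ℕ):ℝ) - (V.card:ℝ) := by
        rw [Nat.cast_sub hvle]
      rw [this]
      have : ((m-1:ℕ):ℝ) = (m:ℝ) - 1 := by
        rw [Nat.cast_sub (by omega : 1 ≤ m)]; norm_num
      rw [this]; ring
    have hc02 : (2:ℝ) ≤ c0 := by
      rw [hc0]; exact_mod_cast (by omega : 2 ≤ m - 1 - V.card)
    set T : ℝ := (((m:ℝ)-1)*r^2 - 1)/(2*r*c0) with hTdef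
    have hden : (0:ℝ) < 2*r*c0 := by nlinarith
    have hT : T*(2*r*c0) = ((m:ℝ)-1)*r^2 - 1 := div_mul_cancel₀ _ hden.ne'
    have hTpos : 0 < T := div_pos (by nlinarith) hden
    have hfid : v*r^2 + c0*(T-r)^2 = c0*T^2 + 1 := by
      linear_combination r^2 * hvS - hT
    have hnn : 0 ≤ c0*T^2 + 1 - 2*T := by nlinarith [sq_nonneg (T-1), sq_nonneg T]
    refine ⟨pt m V T, Real.sqrt (c0*T^2 + 1 - 2*T), Real.sqrt (c0*T^2 + 1),
      Real.sqrt_lt_sqrt hnn (by linarith), fun k => ?_⟩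
    by_cases hkW : k ∈ W
    · rw [if_pos hkW]
      by_cases hkf : k = far
      · rw [hkf, dist_pt_far hm r hVf T]
        exact congrArg Real.sqrt hfid
      · exact dist_pt_mem hm r hVf T (mem_erase.mpr ⟨hkf, hkW⟩)
    · rw [if_neg hkW]
      have hkf : k ≠ far := fun h => hkW (h ▸ hf)
      exact dist_pt_not_mem hm r hVf T (fun h => hkW (mem_of_mem_erase h)) hkf
  · -- case B : far ∉ W
    have hkj : ∃ kj, kj ∉ W ∧ kj ≠ far := by
      by_cases h : k1 = far
      · exact ⟨k2, h2, fun hh => h12 (hh ▸ h ▸ rfl)⟩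
      · exact ⟨k1, h1, h⟩
    obtain ⟨kj, hkjW, hkjf⟩ := hkj
    have hVsub : W ⊆ (univ.erase far).erase kj := by
      intro k hk
      exact mem_erase.mpr ⟨fun h => hkjW (h ▸ hk), mem_erase.mpr ⟨fun h => hf (h ▸ hk),
        mem_univ _⟩⟩
    have hVcard : W.card + 2 ≤ m := by
      have h3 := Finset.card_le_card hVsub
      rw [card_erase_of_mem (mem_erase.mpr ⟨hkjf, mem_univ _⟩),
        card_erase_of_mem (mem_univ _), card_univ, Fintype.card_fin] at h3
      omega
    have hvle : W.card ≤ m - 1 := by omega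
    set v : ℝ := (W.card : ℝ) with hv
    set c0 : ℝ := ((m - 1 - W.card : ℕ) : ℝ) with hc0
    have hvS : v + c0 = (m:ℝ) - 1 := by
      rw [hv, hc0]
      have h4 : ((m - 1 - W.card : ℕ) : ℝ) = ((m-1:ℕ):ℝ) - (W.card:ℝ) := by
        rw [Nat.cast_sub hvle]
      rw [h4]
      have : ((m-1:ℕ):ℝ) = (m:ℝ) - 1 := by
        rw [Nat.cast_sub (by omega : 1 ≤ m)]; norm_num
      rw [this]; ring
    have hc01 : (1:ℝ) ≤ c0 := by
      rw [hc0]; exact_mod_cast (by omega : 1 ≤ m - 1 - W.card)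
    set T : ℝ := (((m:ℝ)-1)*r^2 - 1)/(2*(c0*r - 1)) with hTdef
    have hden : (0:ℝ) < 2*(c0*r - 1) := by nlinarith
    have hT : T*(2*(c0*r - 1)) = ((m:ℝ)-1)*r^2 - 1 := div_mul_cancel₀ _ hden.ne'
    have hTpos : 0 < T := div_pos (by nlinarith) hden
    have hfid : v*r^2 + c0*(T-r)^2 = c0*T^2 + 1 - 2*T := by
      linear_combination r^2 * hvS - hT
    have hnn : 0 ≤ c0*T^2 + 1 - 2*T := by nlinarith [sq_nonneg (T-1), sq_nonneg T]
    refine ⟨pt m W T, Real.sqrt (c0*T^2 + 1 - 2*T), Real.sqrt (c0*T^2 + 1),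
      Real.sqrt_lt_sqrt hnn (by linarith), fun k => ?_⟩
    by_cases hkW : k ∈ W
    · rw [if_pos hkW]
      exact dist_pt_mem hm r hf T hkW
    · rw [if_neg hkW]
      by_cases hkf : k = far
      · rw [hkf, dist_pt_far hm r hf T]
        exact congrArg Real.sqrt hfid
      · exact dist_pt_not_mem hm r hf T hkW hkf

end Aux

section Swap

variable {m n w : ℕ}

lemma expCommCost_eval {α : Type*} [PseudoMetricSpace α] (y : Fin m → α)
    (hw : 1 ≤ w)
    (f : (Fin n → Fin m) → Finset (Fin m) → ℝ) (hmech : IsCommMech w f)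
    (a : Fin n → Fin m) (x : α) (L₀ : Finset (Fin m)) (hL₀ : L₀.card = w)
    {c₁ c₂ : ℝ} (hc : c₁ ≤ c₂)
    (hd : ∀ k, dist x (y k) = if k ∈ L₀ then c₂ else c₁) :
    expCommCost y w f a x = f a L₀ * c₂ + (1 - f a L₀) * c₁ := by
  classical
  set F := univ.filter (fun L : Finset (Fin m) => L.card = w) with hF
  have hcost : ∀ L ∈ F, commCost y L x = if L ⊆ L₀ then c₂ else c₁ := by
    intro L hL
    have hLcard : L.card = w := (mem_filter.mp hL).2
    have hLne : L.Nonempty := Finset.card_pos.mp (by omega)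
    rw [commCost, dif_pos hLne]
    by_cases hsub : L ⊆ L₀
    · rw [if_pos hsub]
      apply le_antisymm
      · obtain ⟨k, hk⟩ := hLne
        refine le_trans (Finset.inf'_le _ hk) ?_
        rw [hd k, if_pos (hsub hk)]
      · apply Finset.le_inf'
        intro k hk
        rw [hd k, if_pos (hsub hk)]
    · rw [if_neg hsub]
      obtain ⟨k, hkL, hkL₀⟩ := Finset.not_subset.mp hsub
      apply le_antisymm
      · refine le_trans (Finset.inf'_le _ hkL) ?_
        rw [hd k, if_neg hkL₀]
      · apply Finset.le_inf'
        intro k' hk'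
        rw [hd k']
        split_ifs
        · exact hc
        · exact le_rfl
  have hsing : F.filter (fun L => L ⊆ L₀) = {L₀} := by
    ext L
    simp only [mem_filter, mem_singleton, hF, mem_univ, true_and]
    constructor
    · rintro ⟨hcard, hsub⟩
      exact Finset.eq_of_subset_of_card_le hsub (by omega)
    · rintro rfl
      exact ⟨hL₀, Finset.Subset.refl _⟩
  have hsplit := Finset.sum_filter_add_sum_filter_not F (fun L => L ⊆ L₀)
    (fun L => f a L * commCost y L x)
  have hsplit2 := Finset.sum_filter_add_sum_filter_not F (fun L => L ⊆ L₀) (fun L => f a L)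
  rw [hsing, Finset.sum_singleton] at hsplit hsplit2
  have htot : ∑ L ∈ F, f a L = 1 := (hmech a).2.2
  rw [htot] at hsplit2
  have e1 : ∑ L ∈ F.filter (fun L => ¬ L ⊆ L₀), f a L * commCost y L x
      = (1 - f a L₀) * c₁ := by
    rw [show (1 : ℝ) - f a L₀ = ∑ L ∈ F.filter (fun L => ¬ L ⊆ L₀), f a L by linarith,
      Finset.sum_mul]
    apply Finset.sum_congr rfl
    intro L hL
    rw [hcost L (mem_of_mem_filter _ hL), if_neg (mem_filter.mp hL).2]
  have e2 : f a L₀ * commCost y L₀ x = f a L₀ * c₂ := by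
    rw [hcost L₀ (by simp [hF, hL₀]), if_pos (Finset.Subset.refl _)]
  rw [expCommCost, ← hF, ← hsplit, e1, e2]

lemma swap_lemma (hm : 3 ≤ m) {r : ℝ} (hr : 2 < r) (hw : 1 ≤ w)
    (f : (Fin n → Fin m) → Finset (Fin m) → ℝ)
    (hmech : IsCommMech w f) (hsp : CommSP (multiCand m r) w f)
    {k1 k2 : Fin m} (h12 : k1 ≠ k2) {L₀ : Finset (Fin m)} (hL₀ : L₀.card = w)
    (h1 : k1 ∉ L₀) (h2 : k2 ∉ L₀) (a : Fin n → Fin m) (i : Fin n) :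
    f (Function.update a i k1) L₀ = f (Function.update a i k2) L₀ := by
  obtain ⟨x, c₁, c₂, hc, hd⟩ := exists_point hm hr L₀ h12 h1 h2
  have near : ∀ kk : Fin m, kk ∉ L₀ →
      ∀ k, dist x (multiCand m r kk) ≤ dist x (multiCand m r k) := by
    intro kk hkk k
    rw [hd kk, if_neg hkk, hd k]
    split_ifs
    · exact hc.le
    · exact le_rfl
  have he : expCommCost (multiCand m r) w f (Function.update a i k1) x
      = expCommCost (multiCand m r) w f (Function.update a i k2) x :=
    le_antisymm (hsp i x a k1 k2 (near k1 h1)) (hsp i x a k2 k1 (near k2 h2))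
  rw [expCommCost_eval (multiCand m r) hw f hmech _ x L₀ hL₀ hc.le hd,
    expCommCost_eval (multiCand m r) hw f hmech _ x L₀ hL₀ hc.le hd] at he
  have hne : c₂ - c₁ ≠ 0 := by linarith
  have : (f (Function.update a i k1) L₀ - f (Function.update a i k2) L₀) * (c₂ - c₁) = 0 := by
    linarith
  rcases mul_eq_zero.mp this with h | h
  · linarith
  · exact absurd h hne

end Swap

section Final

variable {m n w : ℕ}

lemma card_filter_mem_L (a : Fin n → Fin m) (L₀ : Finset (Fin m)) :
    (univ.filter fun i => a i ∈ L₀).card = ∑ k ∈ L₀, votes a k := by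
  classical
  rw [Finset.card_eq_sum_card_fiberwise (f := a) (t := L₀) (s := univ.filter fun i => a i ∈ L₀)
    (fun i hi => (mem_filter.mp (Finset.mem_coe.mp hi)).2)]
  apply Finset.sum_congr rfl
  intro k hk
  rw [votes, Finset.filter_filter]
  congr 1
  apply Finset.filter_congr
  intro i _
  simp only [and_iff_right_iff_imp]
  intro h; rw [h]; exact hk

lemma canon_eq (hm : 3 ≤ m) {r : ℝ} (hr : 2 < r) (hw : 1 ≤ w)
    (f : (Fin n → Fin m) → Finset (Fin m) → ℝ)
    (hmech : IsCommMech w f) (hsp : CommSP (multiCand m r) w f)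
    {L₀ : Finset (Fin m)} (hL₀ : L₀.card = w)
    {kstar : Fin m} (hkstar : kstar ∉ L₀) :
    ∀ (N : ℕ) (a : Fin n → Fin m),
      (univ.filter fun i => a i ∉ L₀ ∧ a i ≠ kstar).card ≤ N →
      f a L₀ = f (fun i => if a i ∈ L₀ then a i else kstar) L₀ := by
  classical
  intro N
  induction N with
  | zero =>
    intro a h0
    have hfe : (univ.filter fun i => a i ∉ L₀ ∧ a i ≠ kstar) = ∅ :=
      Finset.card_eq_zero.mp (Nat.le_zero.mp h0)
    have : (fun i => if a i ∈ L₀ then a i else kstar) = a := by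
      funext i
      by_cases h : a i ∈ L₀
      · rw [if_pos h]
      · rw [if_neg h]
        have := Finset.eq_empty_iff_forall_notMem.mp hfe i
        simp only [mem_filter, mem_univ, true_and] at this
        push_neg at this
        exact (this h).symm
    rw [this]
  | succ N ih =>
    intro a hcard
    by_cases hz : (univ.filter fun i => a i ∉ L₀ ∧ a i ≠ kstar) = ∅
    · -- same as zero case
      have : (fun i => if a i ∈ L₀ then a i else kstar) = a := by
        funext i
        by_cases h : a i ∈ L₀
        · rw [if_pos h]
        · rw [if_neg h]
          have := Finset.eq_empty_iff_forall_notMem.mp hz i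
          simp only [mem_filter, mem_univ, true_and] at this
          push_neg at this
          exact (this h).symm
      rw [this]
    · obtain ⟨i, hi⟩ := Finset.nonempty_iff_ne_empty.mpr hz
      simp only [mem_filter, mem_univ, true_and] at hi
      obtain ⟨hiL, hik⟩ := hi
      set a₂ := Function.update a i kstar with ha₂
      have step1 : f a L₀ = f a₂ L₀ := by
        have h := swap_lemma hm hr hw f hmech hsp hik hL₀ hiL hkstar a i
        rwa [Function.update_eq_self] at h
      have hfilter : (univ.filter fun j => a₂ j ∉ L₀ ∧ a₂ j ≠ kstar)
          = (univ.filter fun j => a j ∉ L₀ ∧ a j ≠ kstar).erase i := by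
        ext j
        simp only [mem_filter, mem_erase, mem_univ, true_and]
        by_cases hji : j = i
        · subst hji
          simp [ha₂, Function.update_self]
        · simp [ha₂, Function.update_of_ne hji, hji]
      have step2 : (univ.filter fun j => a₂ j ∉ L₀ ∧ a₂ j ≠ kstar).card ≤ N := by
        rw [hfilter, Finset.card_erase_of_mem (by simp [hiL, hik])]
        omega
      have step3 : (fun j => if a₂ j ∈ L₀ then a₂ j else kstar)
          = (fun j => if a j ∈ L₀ then a j else kstar) := by
        funext j
        by_cases hji : j = i
        · subst hji
          simp [ha₂, Function.update_self, hkstar, hiL]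
        · simp [ha₂, Function.update_of_ne hji]
      rw [step1, ih a₂ step2, step3]

end Final


/-- On the instance `multiCand m r` (basis vectors plus `(r, ..., r)`, `r > 2`),
for any anonymous strategy-proof randomized `w`-winner scv mechanism with
`1 ≤ w < m - 1`, the probability that a committee `L` of size `w` is elected
depends only on the numbers of votes received by the members of `L`. -/
theorem stmt7 {m n w : ℕ} (hm : 3 ≤ m) (r : ℝ) (hr : 2 < r)
    (hw : 1 ≤ w) (hwm : w < m - 1)
    (f : (Fin n → Fin m) → Finset (Fin m) → ℝ)
    (hmech : IsCommMech w f)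
    (hanon : ∀ a a' : Fin n → Fin m, (∀ k, votes a k = votes a' k) → f a = f a')
    (hsp : CommSP (multiCand m r) w f) :
    ∀ L : Finset (Fin m), L.card = w →
      ∀ a a' : Fin n → Fin m, (∀ k ∈ L, votes a k = votes a' k) →
        f a L = f a' L := by
    classical
  intro L₀ hL₀ a a' hvotes
  -- find a candidate outside L₀
  have hcompl : L₀ᶜ.Nonempty := by
    rw [← Finset.card_pos, Finset.card_compl, Fintype.card_fin, hL₀]
    omega
  obtain ⟨kstar, hks⟩ := hcompl
  have hkstar : kstar ∉ L₀ := Finset.mem_compl.mp hks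
  set ca := fun i => if a i ∈ L₀ then a i else kstar with hca
  set ca' := fun i => if a' i ∈ L₀ then a' i else kstar with hca'
  have h1 : f a L₀ = f ca L₀ :=
    canon_eq hm hr hw f hmech hsp hL₀ hkstar _ a le_rfl
  have h2 : f a' L₀ = f ca' L₀ :=
    canon_eq hm hr hw f hmech hsp hL₀ hkstar _ a' le_rfl
  -- votes of canonical profiles agree everywhere
  have hv : ∀ k, votes ca k = votes ca' k := by
    intro k
    by_cases hkL : k ∈ L₀
    · have e1 : votes ca k = votes a k := by
        unfold votes
        congr 1
        apply Finset.filter_congr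
        intro i _
        simp only [hca]
        constructor
        · intro h
          by_cases hh : a i ∈ L₀
          · rwa [if_pos hh] at h
          · rw [if_neg hh] at h; exact absurd (h ▸ hkL) hkstar
        · intro h
          rw [h] at *
          rw [if_pos hkL]
      have e2 : votes ca' k = votes a' k := by
        unfold votes
        congr 1
        apply Finset.filter_congr
        intro i _
        simp only [hca']
        constructor
        · intro h
          by_cases hh : a' i ∈ L₀
          · rwa [if_pos hh] at h
          · rw [if_neg hh] at h; exact absurd (h ▸ hkL) hkstar
        · intro h
          rw [h] at *
          rw [if_pos hkL]
      rw [e1, e2, hvotes k hkL]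
    · by_cases hkk : k = kstar
      · rw [hkk]
        have key : ∀ b : Fin n → Fin m,
            votes (fun i => if b i ∈ L₀ then b i else kstar) kstar
              = n - (univ.filter fun i => b i ∈ L₀).card := by
          intro b
          unfold votes
          have : (univ.filter fun i => (if b i ∈ L₀ then b i else kstar) = kstar)
              = (univ.filter fun i => ¬ (b i ∈ L₀)) := by
            apply Finset.filter_congr
            intro i _
            constructor
            · intro h hh
              rw [if_pos hh] at h
              exact hkstar (h ▸ hh)
            · intro h
              rw [if_neg h]
          rw [this]
          have hsum := Finset.card_filter_add_card_filter_not
            (s := (univ : Finset (Fin n))) (p := fun i => b i ∈ L₀)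
          rw [card_univ, Fintype.card_fin] at hsum
          omega
        rw [key a, key a', card_filter_mem_L a L₀, card_filter_mem_L a' L₀,
          Finset.sum_congr rfl (fun k hk => hvotes k hk)]
      · have key : ∀ b : Fin n → Fin m,
            votes (fun i => if b i ∈ L₀ then b i else kstar) k = 0 := by
          intro b
          unfold votes
          rw [Finset.card_eq_zero, Finset.filter_eq_empty_iff]
          intro i _
          show ¬(if b i ∈ L₀ then b i else kstar) = k
          by_cases hh : b i ∈ L₀
          · rw [if_pos hh]; intro h; exact hkL (h ▸ hh)
          · rw [if_neg hh]; exact fun h => hkk h.symm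
        rw [key a, key a']
  rw [h1, h2, hanon ca ca' hv]
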